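/- For m ≥ 0 and n ≥ 1, define C_m(n,n) = ∑_{a=0}^{m} (-1)^{m-a} H_a(n) H_{m-a}(n), where H_0(n)=1 and H_r(n) = ∑_{0<m₁<⋯<m_r<n} 1/(m₁⋯m_r). Then C_m(n,n) = (-1)^{m/2} · H^{(2)}_{m/2}(n) if m is even, and C_m(n,n) = 0 if m is odd, where H^{(2)}_r(n) = ∑_{0<m₁<⋯<m_r<n} 1/(m₁²⋯m_r²). -/

import Mathlib

/-- `H_r(n) = ∑_{0<m₁<⋯<m_r<n} 1/(m₁⋯m_r)`, with `H_0(n) = 1`. -/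
noncomputable def Hh (r n : ℕ) : ℚ :=
  ∑ s ∈ Finset.powersetCard r (Finset.Icc 1 (n - 1)), ∏ m ∈ s, 1 / (m : ℚ)

/-- `H^{(2)}_r(n) = ∑_{0<m₁<⋯<m_r<n} 1/(m₁²⋯m_r²)`. -/
noncomputable def H2 (r n : ℕ) : ℚ :=
  ∑ s ∈ Finset.powersetCard r (Finset.Icc 1 (n - 1)), ∏ m ∈ s, 1 / (m : ℚ) ^ 2

open Polynomial Finset

lemma coeff_prod_one_add (f : ℕ → ℚ) (s : Finset ℕ) (k : ℕ) :
    (∏ i ∈ s, (1 + Polynomial.C (f i) * Polynomial.X)).coeff k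
      = ∑ t ∈ s.powersetCard k, ∏ m ∈ t, f m := by
  induction s using Finset.induction generalizing k with
  | empty =>
    cases k with
    | zero => simp
    | succ k =>
      rw [Finset.powersetCard_eq_empty.mpr (by simp), Finset.sum_empty]
      simp [Polynomial.coeff_one]
  | @insert x s hx ih =>
    rw [Finset.prod_insert hx, add_mul, one_mul, Polynomial.coeff_add,
      mul_assoc, Polynomial.coeff_C_mul]
    have hdisj : Disjoint (s.powersetCard k) ((s.powersetCard (k-1)).image (insert x)) := by
      rw [Finset.disjoint_left]
      intro t ht ht'
      obtain ⟨u, hu, rfl⟩ := Finset.mem_image.mp ht'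
      have := (Finset.mem_powersetCard.mp ht).1
      exact hx (this (Finset.mem_insert_self x u))
    cases k with
    | zero =>
      simp only [Polynomial.coeff_X_mul_zero, mul_zero, add_zero] at *
      rw [ih 0]
      congr 1
      rw [Finset.powersetCard_zero, Finset.powersetCard_zero]
    | succ k =>
      rw [Finset.powersetCard_succ_insert hx, Finset.sum_union]
      · have hinj : ∀ t ∈ s.powersetCard k, ∀ u ∈ s.powersetCard k,
            insert x t = insert x u → t = u := by
          intro t ht u hu h
          have hxt : x ∉ t := fun hh => hx ((Finset.mem_powersetCard.mp ht).1 hh)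
          have hxu : x ∉ u := fun hh => hx ((Finset.mem_powersetCard.mp hu).1 hh)
          rw [← Finset.erase_insert hxt, ← Finset.erase_insert hxu, h]
        rw [Finset.sum_image hinj, Polynomial.coeff_X_mul, ih, ih]
        congr 1
        rw [Finset.mul_sum]
        refine Finset.sum_congr rfl fun t ht => ?_
        have hxt : x ∉ t := fun hh => hx ((Finset.mem_powersetCard.mp ht).1 hh)
        rw [Finset.prod_insert hxt]
      · simpa using hdisj

theorem C_diag_eq (m n : ℕ) (hn : 1 ≤ n) :
    (∑ a ∈ Finset.range (m + 1), (-1 : ℚ) ^ (m - a) * Hh a n * Hh (m - a) n) =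
      if Even m then (-1 : ℚ) ^ (m / 2) * H2 (m / 2) n else 0 := by
  set S := Finset.Icc 1 (n - 1)
  set c : ℕ → ℚ := fun i => 1 / (i : ℚ) with hc
  set P : ℚ[X] := ∏ i ∈ S, (1 + C (c i) * X) with hP
  set Q : ℚ[X] := ∏ i ∈ S, (1 + C (-(c i)) * X) with hQ
  set R : ℚ[X] := ∏ i ∈ S, (1 + C (-((c i) ^ 2)) * X) with hR
  have hPc : ∀ a, P.coeff a = Hh a n := fun a => coeff_prod_one_add c S a
  have hQc : ∀ b, Q.coeff b = (-1 : ℚ) ^ b * Hh b n := by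
    intro b
    rw [hQ, coeff_prod_one_add, Hh, Finset.mul_sum]
    refine Finset.sum_congr rfl fun t ht => ?_
    have hcard : t.card = b := (Finset.mem_powersetCard.mp ht).2
    rw [← hcard]
    calc ∏ x ∈ t, -(c x) = ∏ x ∈ t, (-1 : ℚ) * c x := by
          refine Finset.prod_congr rfl fun x _ => ?_; ring
      _ = (-1 : ℚ) ^ t.card * ∏ x ∈ t, c x := by
          rw [Finset.prod_mul_distrib, Finset.prod_const]
      _ = (-1 : ℚ) ^ t.card * ∏ x ∈ t, 1 / (x:ℚ) := rfl
  have hRc : ∀ k, R.coeff k = (-1 : ℚ) ^ k * H2 k n := by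
    intro k
    rw [hR, coeff_prod_one_add, H2, Finset.mul_sum]
    refine Finset.sum_congr rfl fun t ht => ?_
    have hcard : t.card = k := (Finset.mem_powersetCard.mp ht).2
    rw [← hcard]
    calc ∏ x ∈ t, -((c x) ^ 2) = ∏ x ∈ t, (-1 : ℚ) * (c x)^2 := by
          refine Finset.prod_congr rfl fun x _ => ?_; ring
      _ = (-1 : ℚ) ^ t.card * ∏ x ∈ t, (c x)^2 := by
          rw [Finset.prod_mul_distrib, Finset.prod_const]
      _ = (-1 : ℚ) ^ t.card * ∏ x ∈ t, 1 / (x:ℚ)^2 := by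
          rw [hc]; congr 1; exact Finset.prod_congr rfl fun x _ => by rw [div_pow]; norm_num
  have key : P * Q = Polynomial.expand ℚ 2 R := by
    rw [hP, hQ, hR, ← Finset.prod_mul_distrib, map_prod]
    refine Finset.prod_congr rfl fun i _ => ?_
    rw [map_add, map_mul, map_one, Polynomial.expand_C, Polynomial.expand_X]
    rw [map_neg, map_neg, map_pow]
    ring
  have hcoeff : (P * Q).coeff m =
      ∑ a ∈ Finset.range (m + 1), (-1 : ℚ) ^ (m - a) * Hh a n * Hh (m - a) n := by
    rw [Polynomial.coeff_mul, Finset.Nat.sum_antidiagonal_eq_sum_range_succ_mk]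
    refine Finset.sum_congr rfl fun a _ => ?_
    rw [hPc, hQc]
    ring
  rw [← hcoeff, key, Polynomial.coeff_expand (by norm_num : 0 < 2), hRc]
  by_cases hm : Even m
  · rw [if_pos hm, if_pos (even_iff_two_dvd.mp hm)]
  · rw [if_neg hm, if_neg (fun h => hm (even_iff_two_dvd.mpr h))]
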